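/- arXiv:1406.3991 — 4 statements merged into one kernel-verified Lean document; each statement's English description precedes it below -/
import Mathlib

section
/- Let f : ℝⁿ → ℝ be twice continuously differentiable on an open set containing the compact set 𝒳 ⊆ ℝⁿ, and suppose that for all x ∈ 𝒳 and all i, j = 1,…,n one has M̲ᵢⱼ < ∂²f/∂xⱼ∂xᵢ(x) < M̄ᵢⱼ. Then for any xₐ, x_b ∈ 𝒳 such that the line segment between xₐ and x_b is contained in 𝒳, one has f(x_b) − f(xₐ) ≥ ∇f(xₐ)ᵀ(x_b − xₐ) + (1/2) Σᵢ₌₁ⁿ Σⱼ₌₁ⁿ min( M̲ᵢⱼ (x_{b,i} − x_{a,i})(x_{b,j} − x_{a,j}), M̄ᵢⱼ (x_{b,i} − x_{a,i})(x_{b,j} − x_{a,j}) ). -/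
open Finset

/-- The partial derivative ∂f/∂xᵢ of `f : ℝⁿ → ℝ` at `x`. -/
noncomputable def pderiv1 {n : ℕ} (f : (Fin n → ℝ) → ℝ) (i : Fin n) (x : Fin n → ℝ) : ℝ :=
  fderiv ℝ f x (Pi.single i 1)

/-- The second partial derivative ∂²f/∂xⱼ∂xᵢ of `f : ℝⁿ → ℝ` at `x`. -/
noncomputable def pderiv2 {n : ℕ} (f : (Fin n → ℝ) → ℝ) (i j : Fin n) (x : Fin n → ℝ) : ℝ :=
  pderiv1 (pderiv1 f i) j x

theorem quadratic_lower_bound {n : ℕ} (f : (Fin n → ℝ) → ℝ) (X U : Set (Fin n → ℝ))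
    (hX : IsCompact X) (hU : IsOpen U) (hXU : X ⊆ U)
    (hf : ContDiffOn ℝ 2 f U)
    (Ml Mu : Fin n → Fin n → ℝ)
    (hM : ∀ x ∈ X, ∀ i j, Ml i j < pderiv2 f i j x ∧ pderiv2 f i j x < Mu i j)
    (xa xb : Fin n → ℝ) (hxa : xa ∈ X) (hxb : xb ∈ X)
    (hseg : segment ℝ xa xb ⊆ X) :
    f xb - f xa ≥ (∑ i, pderiv1 f i xa * (xb i - xa i)) +
      (1 / 2) * ∑ i, ∑ j, min (Ml i j * ((xb i - xa i) * (xb j - xa j)))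
        (Mu i j * ((xb i - xa i) * (xb j - xa j))) := by
  classical
  set d : Fin n → ℝ := xb - xa with hd
  have hdi : ∀ i, d i = xb i - xa i := fun i => rfl
  set γ : ℝ → (Fin n → ℝ) := fun t => xa + t • d with hγdef
  have hγX : ∀ t ∈ Set.Icc (0:ℝ) 1, γ t ∈ X := by
    intro t ht
    apply hseg
    rw [segment_eq_image']
    exact ⟨t, ht, rfl⟩
  have hγU : ∀ t ∈ Set.Icc (0:ℝ) 1, γ t ∈ U := fun t ht => hXU (hγX t ht)
  have hγd : ∀ t : ℝ, HasDerivAt γ d t := by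
    intro t
    simpa [hγdef] using ((hasDerivAt_id t).smul_const d).const_add xa
  have hfd : ∀ x ∈ U, HasFDerivAt f (fderiv ℝ f x) x := fun x hx =>
    ((hf.differentiableOn (by norm_num)).differentiableAt (hU.mem_nhds hx)).hasFDerivAt
  have hF1 : ContDiffOn ℝ 1 (fderiv ℝ f) U := hf.fderiv_of_isOpen hU (by norm_num)
  have hFd : ∀ x ∈ U, HasFDerivAt (fderiv ℝ f) (fderiv ℝ (fderiv ℝ f) x) x := fun x hx =>
    ((hF1.differentiableOn one_ne_zero).differentiableAt (hU.mem_nhds hx)).hasFDerivAt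
  -- second partials identity
  have hp2 : ∀ x ∈ U, ∀ i j, pderiv2 f i j x
      = fderiv ℝ (fderiv ℝ f) x (Pi.single j 1) (Pi.single i 1) := by
    intro x hx i j
    have h1 : HasFDerivAt (fun y => fderiv ℝ f y (Pi.single i 1))
        ((ContinuousLinearMap.apply ℝ ℝ (Pi.single i 1)).comp
          (fderiv ℝ (fderiv ℝ f) x)) x :=
      (ContinuousLinearMap.apply ℝ ℝ ((Pi.single i 1 : Fin n → ℝ))).hasFDerivAt.comp x (hFd x hx)
    show fderiv ℝ (pderiv1 f i) x (Pi.single j 1) = _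
    rw [show pderiv1 f i = fun y => fderiv ℝ f y (Pi.single i 1) from rfl, h1.fderiv]
    rfl
  have hdsum : d = ∑ j, d j • (Pi.single j 1 : Fin n → ℝ) := by
    rw [show (fun j => d j • (Pi.single j 1 : Fin n → ℝ)) = fun j => Pi.single j (d j) by
      funext j; ext k; simp [Pi.single_apply, mul_ite]]
    rw [Finset.univ_sum_single]
  -- first derivative at xa
  have hgrad : fderiv ℝ f xa d = ∑ i, pderiv1 f i xa * (xb i - xa i) := by
    conv_lhs => rw [hdsum]
    rw [map_sum]
    refine Finset.sum_congr rfl fun i _ => ?_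
    rw [map_smul]
    simp [pderiv1, hdi, mul_comm]
  -- second derivative expansion
  have hBsum : ∀ x ∈ U, fderiv ℝ (fderiv ℝ f) x d d
      = ∑ i, ∑ j, pderiv2 f i j x * (d i * d j) := by
    intro x hx
    have expand : ∀ (L : (Fin n → ℝ) →L[ℝ] ℝ), L d = ∑ i, d i * L (Pi.single i 1) := by
      intro L
      conv_lhs => rw [hdsum]
      rw [map_sum]
      simp [smul_eq_mul]
    have expand2 : ∀ v : Fin n → ℝ, fderiv ℝ (fderiv ℝ f) x d v
        = ∑ j, d j * fderiv ℝ (fderiv ℝ f) x (Pi.single j 1) v := by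
      intro v
      conv_lhs => rw [hdsum]
      rw [map_sum, ContinuousLinearMap.sum_apply]
      simp [smul_eq_mul]
    rw [expand (fderiv ℝ (fderiv ℝ f) x d)]
    refine Finset.sum_congr rfl fun i _ => ?_
    rw [expand2 (Pi.single i 1), Finset.mul_sum]
    refine Finset.sum_congr rfl fun j _ => ?_
    rw [hp2 x hx i j]
    ring
  set m : ℝ := ∑ i, ∑ j, min (Ml i j * (d i * d j)) (Mu i j * (d i * d j)) with hm
  have hq : ∀ t ∈ Set.Icc (0:ℝ) 1, m ≤ fderiv ℝ (fderiv ℝ f) (γ t) d d := by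
    intro t ht
    rw [hBsum _ (hγU t ht), hm]
    refine Finset.sum_le_sum fun i _ => Finset.sum_le_sum fun j _ => ?_
    obtain ⟨hl, hu⟩ := hM (γ t) (hγX t ht) i j
    rcases le_or_gt 0 (d i * d j) with hp | hp
    · exact le_trans (min_le_left _ _) (by nlinarith)
    · exact le_trans (min_le_right _ _) (by nlinarith)
  set g : ℝ → ℝ := fun t => f (γ t) with hgdef
  set h1 : ℝ → ℝ := fun t => fderiv ℝ f (γ t) d with hh1def
  have hg' : ∀ t ∈ Set.Icc (0:ℝ) 1, HasDerivAt g (h1 t) t := fun t ht =>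
    (hfd _ (hγU t ht)).comp_hasDerivAt t (hγd t)
  have hh' : ∀ t ∈ Set.Icc (0:ℝ) 1,
      HasDerivAt h1 (fderiv ℝ (fderiv ℝ f) (γ t) d d) t := by
    intro t ht
    have hc : HasDerivAt (fun s => fderiv ℝ f (γ s)) (fderiv ℝ (fderiv ℝ f) (γ t) d) t :=
      (hFd _ (hγU t ht)).comp_hasDerivAt t (hγd t)
    simpa using hc.clm_apply (hasDerivAt_const t d)
  -- step A: h1 t - h1 0 - m*t monotone
  set ψ : ℝ → ℝ := fun t => h1 t - h1 0 - m * t with hψdef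
  have hψ' : ∀ t ∈ Set.Icc (0:ℝ) 1,
      HasDerivAt ψ (fderiv ℝ (fderiv ℝ f) (γ t) d d - m) t := by
    intro t ht
    have := ((hh' t ht).sub_const (h1 0)).sub ((hasDerivAt_id t).const_mul m)
    exact this.congr_deriv (by ring)
  have hψmono : MonotoneOn ψ (Set.Icc 0 1) := by
    apply monotoneOn_of_deriv_nonneg (convex_Icc 0 1)
    · exact fun t ht => (hψ' t ht).continuousAt.continuousWithinAt
    · rw [interior_Icc]
      exact fun t ht => (hψ' t (Set.Ioo_subset_Icc_self ht)).differentiableAt.differentiableWithinAt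
    · rw [interior_Icc]
      intro t ht
      rw [(hψ' t (Set.Ioo_subset_Icc_self ht)).deriv]
      have := hq t (Set.Ioo_subset_Icc_self ht)
      linarith
  have hψnn : ∀ t ∈ Set.Icc (0:ℝ) 1, 0 ≤ ψ t := by
    intro t ht
    have := hψmono (Set.left_mem_Icc.2 zero_le_one) ht ht.1
    simpa [hψdef] using this
  -- step B
  set φ : ℝ → ℝ := fun t => g t - g 0 - h1 0 * t - m / 2 * t ^ 2 with hφdef
  have hφ' : ∀ t ∈ Set.Icc (0:ℝ) 1, HasDerivAt φ (ψ t) t := by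
    intro t ht
    have := (((hg' t ht).sub_const (g 0)).sub ((hasDerivAt_id t).const_mul (h1 0))).sub
      (((hasDerivAt_pow 2 t)).const_mul (m / 2))
    refine this.congr_deriv ?_
    simp [hψdef]
    ring
  have hφmono : MonotoneOn φ (Set.Icc 0 1) := by
    apply monotoneOn_of_deriv_nonneg (convex_Icc 0 1)
    · exact fun t ht => (hφ' t ht).continuousAt.continuousWithinAt
    · rw [interior_Icc]
      exact fun t ht => (hφ' t (Set.Ioo_subset_Icc_self ht)).differentiableAt.differentiableWithinAt
    · rw [interior_Icc]
      intro t ht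
      rw [(hφ' t (Set.Ioo_subset_Icc_self ht)).deriv]
      exact hψnn t (Set.Ioo_subset_Icc_self ht)
  have hfin := hφmono (Set.left_mem_Icc.2 zero_le_one) (Set.right_mem_Icc.2 zero_le_one) zero_le_one
  have hγ0 : γ 0 = xa := by simp [hγdef]
  have hγ1 : γ 1 = xb := by
    funext k
    simp [hγdef, hdi]
  have hmm : m = ∑ i, ∑ j, min (Ml i j * ((xb i - xa i) * (xb j - xa j)))
      (Mu i j * ((xb i - xa i) * (xb j - xa j))) := by
    rw [hm]
    exact Finset.sum_congr rfl fun i _ => Finset.sum_congr rfl fun j _ => rfl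
  have hh10 : h1 0 = ∑ i, pderiv1 f i xa * (xb i - xa i) := by
    rw [hh1def]; simp only [hγ0]; exact hgrad
  simp only [hφdef, hgdef, hγ0, hγ1] at hfin
  rw [hh10, hmm] at hfin
  push_cast at hfin ⊢
  linarith
end

section
/- Let f : ℝⁿ → ℝ be twice continuously differentiable on an open set containing the compact set 𝒳 ⊆ ℝⁿ, and suppose that for all x ∈ 𝒳 and all i, j = 1,…,n one has M̲ᵢⱼ < ∂²f/∂xⱼ∂xᵢ(x) < M̄ᵢⱼ. Then for any xₐ, x_b ∈ 𝒳 such that the line segment between xₐ and x_b is contained in 𝒳, one has f(x_b) − f(xₐ) ≤ ∇f(xₐ)ᵀ(x_b − xₐ) + (1/2) Σᵢ₌₁ⁿ Σⱼ₌₁ⁿ max( M̲ᵢⱼ (x_{b,i} − x_{a,i})(x_{b,j} − x_{a,j}), M̄ᵢⱼ (x_{b,i} − x_{a,i})(x_{b,j} − x_{a,j}) ). -/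
open Finset

lemma clm_sum_eval {n : ℕ} (L : (Fin n → ℝ) →L[ℝ] ℝ) (v : Fin n → ℝ) :
    L v = ∑ i, v i * L (Pi.single i 1) := by
  have hv : v = ∑ i, v i • (Pi.single i 1 : Fin n → ℝ) := by
    funext j
    simp [Pi.single_apply, Finset.sum_apply]
  conv_lhs => rw [hv]
  rw [map_sum]
  simp [smul_eq_mul]

theorem quadratic_upper_bound {n : ℕ} (f : (Fin n → ℝ) → ℝ) (X U : Set (Fin n → ℝ))
    (hX : IsCompact X) (hU : IsOpen U) (hXU : X ⊆ U)
    (hf : ContDiffOn ℝ 2 f U)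
    (Ml Mu : Fin n → Fin n → ℝ)
    (hM : ∀ x ∈ X, ∀ i j, Ml i j < pderiv2 f i j x ∧ pderiv2 f i j x < Mu i j)
    (xa xb : Fin n → ℝ) (hxa : xa ∈ X) (hxb : xb ∈ X)
    (hseg : segment ℝ xa xb ⊆ X) :
    f xb - f xa ≤ (∑ i, pderiv1 f i xa * (xb i - xa i)) +
      (1 / 2) * ∑ i, ∑ j, max (Ml i j * ((xb i - xa i) * (xb j - xa j)))
        (Mu i j * ((xb i - xa i) * (xb j - xa j))) := by
  set v : Fin n → ℝ := fun i => xb i - xa i with hv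
  set γ : ℝ → (Fin n → ℝ) := fun t i => xa i + t * v i with hγ
  -- γ maps [0,1] into the segment
  have hγseg : ∀ t ∈ Set.Icc (0:ℝ) 1, γ t ∈ segment ℝ xa xb := by
    intro t ht
    rw [segment_eq_image']
    exact ⟨t, ht, by funext i; simp [hγ, hv, Pi.add_apply, Pi.smul_apply]⟩
  have hγX : ∀ t ∈ Set.Icc (0:ℝ) 1, γ t ∈ X := fun t ht => hseg (hγseg t ht)
  -- γ is continuous
  have hγc : Continuous γ := by
    apply continuous_pi
    intro i
    fun_prop
  set V : Set ℝ := γ ⁻¹' U with hV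
  have hVopen : IsOpen V := hU.preimage hγc
  have hIccV : Set.Icc (0:ℝ) 1 ⊆ V := fun t ht => hXU (hγX t ht)
  -- derivative of γ
  have hγd : ∀ t : ℝ, HasDerivAt γ v t := by
    intro t
    rw [hasDerivAt_pi]
    intro i
    exact (hasDerivAt_mul_const (v i)).const_add (xa i)
  have hfd : ContDiffOn ℝ 1 (fderiv ℝ f) U := hf.fderiv_of_isOpen hU (by norm_num)
  have hFi : ∀ i, ContDiffOn ℝ 1 (pderiv1 f i) U := by
    intro i
    exact hfd.clm_apply contDiffOn_const
  set g : ℝ → ℝ := fun t => f (γ t) with hg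
  set g1 : ℝ → ℝ := fun t => ∑ i, v i * pderiv1 f i (γ t) with hg1
  set g2 : ℝ → ℝ := fun t => ∑ i, v i * ∑ j, v j * pderiv2 f i j (γ t) with hg2
  -- g' = g1 on V
  have hg' : ∀ t ∈ V, HasDerivAt g (g1 t) t := by
    intro t ht
    have hx : γ t ∈ U := ht
    have hdf : DifferentiableAt ℝ f (γ t) :=
      (hf.differentiableOn (by norm_num)).differentiableAt (hU.mem_nhds hx)
    have h := hdf.hasFDerivAt.comp_hasDerivAt t (hγd t)
    have : fderiv ℝ f (γ t) v = g1 t := clm_sum_eval _ _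
    rwa [this] at h
  -- g1' = g2 on V
  have hg1' : ∀ t ∈ V, HasDerivAt g1 (g2 t) t := by
    intro t ht
    have hx : γ t ∈ U := ht
    apply HasDerivAt.fun_sum
    intro i _
    have hdF : DifferentiableAt ℝ (pderiv1 f i) (γ t) :=
      ((hFi i).differentiableOn one_ne_zero).differentiableAt (hU.mem_nhds hx)
    have h := (hdF.hasFDerivAt.comp_hasDerivAt t (hγd t)).const_mul (v i)
    have he : fderiv ℝ (pderiv1 f i) (γ t) v = ∑ j, v j * pderiv2 f i j (γ t) :=
      clm_sum_eval _ _
    rwa [he] at h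
  set B : ℝ := ∑ i, ∑ j, max (Ml i j * (v i * v j)) (Mu i j * (v i * v j)) with hB
  -- pointwise bound
  have hg2le : ∀ t ∈ Set.Icc (0:ℝ) 1, g2 t ≤ B := by
    intro t ht
    have hxX := hγX t ht
    show ∑ i, v i * ∑ j, v j * pderiv2 f i j (γ t) ≤
      ∑ i, ∑ j, max (Ml i j * (v i * v j)) (Mu i j * (v i * v j))
    apply Finset.sum_le_sum
    intro i _
    rw [Finset.mul_sum]
    apply Finset.sum_le_sum
    intro j _
    obtain ⟨h1, h2⟩ := hM (γ t) hxX i j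
    rcases le_total 0 (v i * v j) with hc | hc
    · have : v i * (v j * pderiv2 f i j (γ t)) ≤ Mu i j * (v i * v j) := by nlinarith
      exact this.trans (le_max_right _ _)
    · have : v i * (v j * pderiv2 f i j (γ t)) ≤ Ml i j * (v i * v j) := by nlinarith
      exact this.trans (le_max_left _ _)
  -- first MVT: ψ = g1 - t*B is antitone on [0,1]
  set ψ : ℝ → ℝ := fun t => g1 t - t * B with hψ
  have hψ' : ∀ t ∈ Set.Icc (0:ℝ) 1, HasDerivAt ψ (g2 t - B) t := by
    intro t ht
    exact (hg1' t (hIccV ht)).sub ((hasDerivAt_mul_const B))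
  have hanti : AntitoneOn ψ (Set.Icc 0 1) := by
    apply antitoneOn_of_deriv_nonpos (convex_Icc 0 1)
    · intro t ht
      exact (hψ' t ht).differentiableAt.continuousAt.continuousWithinAt
    · intro t ht
      rw [interior_Icc] at ht
      exact (hψ' t (Set.Ioo_subset_Icc_self ht)).differentiableAt.differentiableWithinAt
    · intro t ht
      rw [interior_Icc] at ht
      have htI := Set.Ioo_subset_Icc_self ht
      rw [(hψ' t htI).deriv]
      have := hg2le t htI
      linarith
  have hg1le : ∀ t ∈ Set.Icc (0:ℝ) 1, g1 t ≤ g1 0 + t * B := by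
    intro t ht
    have h0 : (0:ℝ) ∈ Set.Icc (0:ℝ) 1 := by norm_num
    have := hanti h0 ht ht.1
    simp only [hψ, zero_mul, sub_zero] at this
    linarith
  -- second MVT: φ = g - g1 0 * t - B * t^2/2 is antitone on [0,1]
  set φ : ℝ → ℝ := fun t => g t - g1 0 * t - B * t ^ 2 / 2 with hφ
  have hφ' : ∀ t ∈ Set.Icc (0:ℝ) 1, HasDerivAt φ (g1 t - g1 0 - B * t) t := by
    intro t ht
    have h1 : HasDerivAt (fun t : ℝ => g1 0 * t) (g1 0) t := by
      simpa using (hasDerivAt_id t).const_mul (g1 0)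
    have h2 : HasDerivAt (fun t : ℝ => B * t ^ 2 / 2) (B * t) t := by
      have := ((hasDerivAt_pow 2 t).const_mul B).div_const 2
      simpa using this.congr_deriv (by ring)
    exact ((hg' t (hIccV ht)).sub h1).sub h2
  have hantiφ : AntitoneOn φ (Set.Icc 0 1) := by
    apply antitoneOn_of_deriv_nonpos (convex_Icc 0 1)
    · intro t ht
      exact (hφ' t ht).differentiableAt.continuousAt.continuousWithinAt
    · intro t ht
      rw [interior_Icc] at ht
      exact (hφ' t (Set.Ioo_subset_Icc_self ht)).differentiableAt.differentiableWithinAt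
    · intro t ht
      rw [interior_Icc] at ht
      have htI := Set.Ioo_subset_Icc_self ht
      rw [(hφ' t htI).deriv]
      have := hg1le t htI
      linarith
  have hfinal : φ 1 ≤ φ 0 := hantiφ (by norm_num) (by norm_num) zero_le_one
  have hγ0 : γ 0 = xa := by funext i; simp [hγ]
  have hγ1 : γ 1 = xb := by funext i; simp [hγ, hv]
  have hg0 : g 0 = f xa := by rw [hg]; simp [hγ0]
  have hgone : g 1 = f xb := by rw [hg]; simp [hγ1]
  have hg10 : g1 0 = ∑ i, pderiv1 f i xa * (xb i - xa i) := by
    show ∑ i, v i * pderiv1 f i (γ 0) = _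
    rw [hγ0]
    exact Finset.sum_congr rfl fun i _ => mul_comm _ _
  simp only [hφ, hgone, hg0, hg10] at hfinal
  linarith [hfinal]
end

section
/- Let f : ℝⁿ → ℝ be twice continuously differentiable on an open set containing the compact set 𝒳 ⊆ ℝⁿ, and suppose that for all x ∈ 𝒳 and all i, j = 1,…,n one has M̲ᵢⱼ < ∂²f/∂xⱼ∂xᵢ(x) < M̄ᵢⱼ. Then for any xₐ, x_b ∈ 𝒳 with xₐ ≠ x_b and such that the line segment between xₐ and x_b is contained in 𝒳, the piecewise quadratic bounds hold with strict inequality: f(x_b) − f(xₐ) > ∇f(xₐ)ᵀ(x_b − xₐ) + (1/2) Σᵢ₌₁ⁿ Σⱼ₌₁ⁿ min( M̲ᵢⱼ (x_{b,i} − x_{a,i})(x_{b,j} − x_{a,j}), M̄ᵢⱼ (x_{b,i} − x_{a,i})(x_{b,j} − x_{a,j}) ) and f(x_b) − f(xₐ) < ∇f(xₐ)ᵀ(x_b − xₐ) + (1/2) Σᵢ₌₁ⁿ Σⱼ₌₁ⁿ max( M̲ᵢⱼ (x_{b,i} − x_{a,i})(x_{b,j} − x_{a,j}), M̄ᵢⱼ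 (x_{b,i} − x_{a,i})(x_{b,j} − x_{a,j}) ). -/
open Finset

private lemma aux_min_le (a b d p : ℝ) (h1 : a < d) (h2 : d < b) :
    min (a * p) (b * p) ≤ d * p := by
  rcases le_or_gt 0 p with hp | hp
  · exact (min_le_left _ _).trans (by nlinarith)
  · exact (min_le_right _ _).trans (by nlinarith)

private lemma aux_min_lt (a b d p : ℝ) (h1 : a < d) (h2 : d < b) (hp : p ≠ 0) :
    min (a * p) (b * p) < d * p := by
  rcases hp.lt_or_gt with hp | hp
  · exact (min_le_right _ _).trans_lt (by nlinarith)
  · exact (min_le_left _ _).trans_lt (by nlinarith)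

private lemma aux_le_max (a b d p : ℝ) (h1 : a < d) (h2 : d < b) :
    d * p ≤ max (a * p) (b * p) := by
  rcases le_or_gt 0 p with hp | hp
  · exact le_trans (by nlinarith) (le_max_right _ _)
  · exact le_trans (by nlinarith) (le_max_left _ _)

private lemma aux_lt_max (a b d p : ℝ) (h1 : a < d) (h2 : d < b) (hp : p ≠ 0) :
    d * p < max (a * p) (b * p) := by
  rcases hp.lt_or_gt with hp | hp
  · exact lt_of_lt_of_le (by nlinarith) (le_max_left _ _)
  · exact lt_of_lt_of_le (by nlinarith) (le_max_right _ _)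

theorem quadratic_bounds_strict {n : ℕ} (f : (Fin n → ℝ) → ℝ) (X U : Set (Fin n → ℝ))
    (hX : IsCompact X) (hU : IsOpen U) (hXU : X ⊆ U)
    (hf : ContDiffOn ℝ 2 f U)
    (Ml Mu : Fin n → Fin n → ℝ)
    (hM : ∀ x ∈ X, ∀ i j, Ml i j < pderiv2 f i j x ∧ pderiv2 f i j x < Mu i j)
    (xa xb : Fin n → ℝ) (hxa : xa ∈ X) (hxb : xb ∈ X) (hne : xa ≠ xb)
    (hseg : segment ℝ xa xb ⊆ X) :
    f xb - f xa > (∑ i, pderiv1 f i xa * (xb i - xa i)) +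
      (1 / 2) * (∑ i, ∑ j, min (Ml i j * ((xb i - xa i) * (xb j - xa j)))
        (Mu i j * ((xb i - xa i) * (xb j - xa j)))) ∧
    f xb - f xa < (∑ i, pderiv1 f i xa * (xb i - xa i)) +
      (1 / 2) * (∑ i, ∑ j, max (Ml i j * ((xb i - xa i) * (xb j - xa j)))
        (Mu i j * ((xb i - xa i) * (xb j - xa j)))) := by
  classical
  set v : Fin n → ℝ := xb - xa with hv
  set L : ℝ → (Fin n → ℝ) := fun t => xa + t • v with hLdef
  -- membership of the segment
  have hLseg : ∀ t ∈ Set.Icc (0:ℝ) 1, L t ∈ segment ℝ xa xb := by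
    intro t ht
    rw [segment_eq_image' ℝ xa xb]
    exact ⟨t, ht, rfl⟩
  have hLU : ∀ t ∈ Set.Icc (0:ℝ) 1, L t ∈ U := fun t ht => hXU (hseg (hLseg t ht))
  have hL0 : L 0 = xa := by simp [hLdef]
  have hL1 : L 1 = xb := by simp [hLdef, hv]
  -- derivative of L
  have hL' : ∀ t : ℝ, HasDerivAt L v t := by
    intro t
    have := ((hasDerivAt_id t).smul_const v).const_add xa
    simpa [hLdef] using this
  -- differentiability facts
  have hdf : ∀ x ∈ U, DifferentiableAt ℝ f x := fun x hx =>
    (hf.differentiableOn (by norm_num)).differentiableAt (hU.mem_nhds hx)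
  have hf1 : ContDiffOn ℝ 1 (fderiv ℝ f) U := hf.fderiv_of_isOpen hU (by norm_num)
  have hdf2 : ∀ x ∈ U, DifferentiableAt ℝ (fderiv ℝ f) x := fun x hx =>
    (hf1.differentiableOn (by norm_num)).differentiableAt (hU.mem_nhds hx)
  -- the scalar function along the segment
  set g : ℝ → ℝ := fun t => f (L t) with hgdef
  set g1 : ℝ → ℝ := fun t => fderiv ℝ f (L t) v with hg1def
  have hg' : ∀ t ∈ Set.Icc (0:ℝ) 1, HasDerivAt g (g1 t) t := by
    intro t ht
    exact (hdf _ (hLU t ht)).hasFDerivAt.comp_hasDerivAt t (hL' t)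
  have hg1' : ∀ t ∈ Set.Icc (0:ℝ) 1,
      HasDerivAt g1 ((fderiv ℝ (fderiv ℝ f) (L t) v) v) t := by
    intro t ht
    have h1 : HasDerivAt (fun s => fderiv ℝ f (L s)) (fderiv ℝ (fderiv ℝ f) (L t) v) t :=
      (hdf2 _ (hLU t ht)).hasFDerivAt.comp_hasDerivAt t (hL' t)
    have h2 := (ContinuousLinearMap.apply ℝ ℝ v).hasFDerivAt.comp_hasDerivAt t h1
    exact h2
  -- pderiv2 as evaluation of the second fderiv
  have hp2 : ∀ x ∈ U, ∀ i j : Fin n,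
      pderiv2 f i j x = (fderiv ℝ (fderiv ℝ f) x (Pi.single j 1)) (Pi.single i 1) := by
    intro x hx i j
    have h1 := (ContinuousLinearMap.apply ℝ ℝ (Pi.single i (1:ℝ))).hasFDerivAt.comp x
        (hdf2 x hx).hasFDerivAt
    have h3 : pderiv1 f i
        = ⇑(ContinuousLinearMap.apply ℝ ℝ (Pi.single i (1:ℝ))) ∘ (fderiv ℝ f) := rfl
    simp only [pderiv2, pderiv1, h3, h1.fderiv]
    rfl
  -- expansion of bilinear evaluation into sums
  have hvsum : v = ∑ j, v j • (Pi.single j 1 : Fin n → ℝ) := by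
    funext k
    simp [Finset.sum_apply, Pi.single_apply]
  have hexp : ∀ x ∈ U,
      (fderiv ℝ (fderiv ℝ f) x v) v
        = ∑ i, ∑ j, pderiv2 f i j x * (v i * v j) := by
    intro x hx
    set A := fderiv ℝ (fderiv ℝ f) x with hA
    have h1 : A v = ∑ j, v j • A (Pi.single j 1) := by
      conv_lhs => rw [hvsum]
      simp [map_sum, map_smul]
    have h2 : (A v) v = ∑ j, v j • ((A (Pi.single j 1)) v) := by
      rw [h1]; simp [ContinuousLinearMap.sum_apply, ContinuousLinearMap.smul_apply]
    have h3 : ∀ j, (A (Pi.single j 1)) v = ∑ i, v i • (A (Pi.single j 1)) (Pi.single i 1) := by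
      intro j
      conv_lhs => rw [hvsum]
      simp [map_sum, map_smul]
    calc (A v) v = ∑ j, ∑ i, v j * (v i * (A (Pi.single j 1)) (Pi.single i 1)) := by
          rw [h2]
          refine Finset.sum_congr rfl fun j _ => ?_
          rw [h3 j, Finset.smul_sum]
          refine Finset.sum_congr rfl fun i _ => ?_
          simp only [smul_eq_mul]
      _ = ∑ i, ∑ j, pderiv2 f i j x * (v i * v j) := by
          rw [Finset.sum_comm]
          exact Finset.sum_congr rfl fun i _ => Finset.sum_congr rfl fun j _ => by
            rw [hp2 x hx i j]; ring
  -- first-order expansion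
  have hexp1 : fderiv ℝ f xa v = ∑ i, pderiv1 f i xa * v i := by
    conv_lhs => rw [hvsum]
    simp [map_sum, map_smul, pderiv1, mul_comm]
  -- Taylor's theorem with Lagrange remainder
  have huicc : UniqueDiffOn ℝ (Set.Icc (0:ℝ) 1) := uniqueDiffOn_Icc zero_lt_one
  have h0Icc : (0:ℝ) ∈ Set.Icc (0:ℝ) 1 := Set.mem_Icc.mpr ⟨le_refl 0, zero_le_one⟩
  have hgC1 : ContDiffOn ℝ 1 g (Set.Icc (0:ℝ) 1) := by
    have hLc : ContDiff ℝ 1 L := contDiff_const.add (contDiff_id.smul contDiff_const)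
    exact (hf.of_le (by norm_num)).comp hLc.contDiffOn (fun t ht => hLU t ht)
  have heq1 : ∀ t ∈ Set.Ioo (0:ℝ) 1, iteratedDerivWithin 1 g (Set.Icc 0 1) t = g1 t := by
    intro t ht
    rw [iteratedDerivWithin_one]
    rw [derivWithin_of_mem_nhds (Icc_mem_nhds ht.1 ht.2)]
    exact (hg' t (Set.Ioo_subset_Icc_self ht)).deriv
  have hdiff1 : DifferentiableOn ℝ (iteratedDerivWithin 1 g (Set.Icc 0 1)) (Set.Ioo 0 1) := by
    intro t ht
    have h1 : DifferentiableAt ℝ g1 t := (hg1' t (Set.Ioo_subset_Icc_self ht)).differentiableAt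
    have h2 : iteratedDerivWithin 1 g (Set.Icc 0 1) =ᶠ[nhds t] g1 :=
      Filter.eventuallyEq_of_mem (isOpen_Ioo.mem_nhds ht) heq1
    exact (h1.congr_of_eventuallyEq h2).differentiableWithinAt
  obtain ⟨c, hc, hTay⟩ := taylor_mean_remainder_lagrange (n := 1) zero_ne_one
    (by rw [Set.uIcc_of_le zero_le_one]; exact_mod_cast hgC1)
    (by rw [Set.uIcc_of_le zero_le_one, Set.uIoo_of_le zero_le_one]; exact hdiff1)
  rw [Set.uIcc_of_le zero_le_one] at hTay
  rw [Set.uIoo_of_le zero_le_one] at hc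
  have hcIcc : c ∈ Set.Icc (0:ℝ) 1 := Set.Ioo_subset_Icc_self hc
  set D : ℝ := ∑ i, ∑ j, pderiv2 f i j (L c) * (v i * v j) with hD
  have h2nd : iteratedDerivWithin 2 g (Set.Icc 0 1) c = D := by
    rw [show (2:ℕ) = 1+1 from rfl, iteratedDerivWithin_succ]
    rw [derivWithin_of_mem_nhds (Icc_mem_nhds hc.1 hc.2)]
    have h2 : iteratedDerivWithin 1 g (Set.Icc 0 1) =ᶠ[nhds c] g1 :=
      Filter.eventuallyEq_of_mem (isOpen_Ioo.mem_nhds hc) heq1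
    rw [h2.deriv_eq, (hg1' c hcIcc).deriv]
    exact hexp (L c) (hLU c hcIcc)
  have hdW0 : iteratedDerivWithin 1 g (Set.Icc 0 1) 0 = ∑ i, pderiv1 f i xa * v i := by
    rw [iteratedDerivWithin_one]
    rw [(hg' 0 h0Icc).differentiableAt.derivWithin (huicc 0 h0Icc)]
    rw [(hg' 0 h0Icc).deriv]
    rw [hg1def]
    simp only [hL0]
    exact hexp1
  have hTpoly : taylorWithinEval g 1 (Set.Icc 0 1) 0 1 = g 0 + (∑ i, pderiv1 f i xa * v i) := by
    simp [taylorWithinEval_succ, taylor_within_zero_eval, hdW0]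
  have hg1v : g 1 = f xb := by rw [hgdef]; simp only [hL1]
  have hg0v : g 0 = f xa := by rw [hgdef]; simp only [hL0]
  have key : f xb - f xa = (∑ i, pderiv1 f i xa * v i) + D / 2 := by
    rw [hTpoly, h2nd, hg1v, hg0v] at hTay
    norm_num at hTay
    linarith
  -- strictness witness
  have hvne : ∃ i, v i ≠ 0 := by
    by_contra h
    push_neg at h
    apply hne
    funext i
    have hi := h i
    rw [hv] at hi
    simp only [Pi.sub_apply, sub_eq_zero] at hi
    exact hi.symm
  obtain ⟨i0, hi0⟩ := hvne
  have hvi : ∀ i, xb i - xa i = v i := fun i => rfl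
  have hMc := hM (L c) (hseg (hLseg c hcIcc))
  simp only [hvi]
  constructor
  · have hlow : (∑ i, ∑ j, min (Ml i j * (v i * v j)) (Mu i j * (v i * v j))) < D := by
      rw [hD]
      refine Finset.sum_lt_sum
        (fun i _ => Finset.sum_le_sum fun j _ =>
          aux_min_le _ _ _ _ (hMc i j).1 (hMc i j).2)
        ⟨i0, Finset.mem_univ _, Finset.sum_lt_sum
          (fun j _ => aux_min_le _ _ _ _ (hMc i0 j).1 (hMc i0 j).2)
          ⟨i0, Finset.mem_univ _,
            aux_min_lt _ _ _ _ (hMc i0 i0).1 (hMc i0 i0).2 (mul_ne_zero hi0 hi0)⟩⟩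
    rw [gt_iff_lt, key]
    linarith
  · have hhigh : D < (∑ i, ∑ j, max (Ml i j * (v i * v j)) (Mu i j * (v i * v j))) := by
      rw [hD]
      refine Finset.sum_lt_sum
        (fun i _ => Finset.sum_le_sum fun j _ =>
          aux_le_max _ _ _ _ (hMc i j).1 (hMc i j).2)
        ⟨i0, Finset.mem_univ _, Finset.sum_lt_sum
          (fun j _ => aux_le_max _ _ _ _ (hMc i0 j).1 (hMc i0 j).2)
          ⟨i0, Finset.mem_univ _,
            aux_lt_max _ _ _ _ (hMc i0 i0).1 (hMc i0 i0).2 (mul_ne_zero hi0 hi0)⟩⟩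
    rw [key]
    linarith
end

section
/- Let f : ℝⁿ → ℝ be twice continuously differentiable on an open set containing the line segment 𝒳_{a,b} = { xₐ + γ(x_b − xₐ) : γ ∈ [0,1] } between two points xₐ, x_b ∈ ℝⁿ, and suppose that for all x ∈ 𝒳_{a,b} and all i, j = 1,…,n one has M̲ᵢⱼ^{a,b} < ∂²f/∂xⱼ∂xᵢ(x) < M̄ᵢⱼ^{a,b}. Then f(x_b) − f(xₐ) ≥ ∇f(xₐ)ᵀ(x_b − xₐ) + (1/2) Σᵢ₌₁ⁿ Σⱼ₌₁ⁿ min( M̲ᵢⱼ^{a,b} (x_{b,i} − x_{a,i})(x_{b,j} − x_{a,j}), M̄ᵢⱼ^{a,b} (x_{b,i} − x_{a,i})(x_{b,j} − x_{a,j}) ) and f(x_b) − f(xₐ) ≤ ∇f(xₐ)ᵀ(x_b − xₐ) + (1/2) Σᵢ₌₁ⁿ Σⱼ₌₁ⁿ max( M̲ᵢⱼ^{a,b} (x_{b,i} − x_{a,i})(x_{b,j} − x_{a,j}), M̄ᵢⱼ^{a,b} (x_{b,i} − x_{a,i})(x_{b,j} − x_{a,j}) ). -/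
open Finset

lemma fderiv_apply_eq_sum {n : ℕ} (F : (Fin n → ℝ) → ℝ) (x v : Fin n → ℝ) :
    fderiv ℝ F x v = ∑ j, v j * pderiv1 F j x := by
  have hv : v = ∑ j, v j • (Pi.single j 1 : Fin n → ℝ) := by
    ext k
    simp [Pi.single_apply]
  conv_lhs => rw [hv]
  rw [map_sum]
  simp [pderiv1]

lemma second_order_lower (g g1 g2 : ℝ → ℝ) (T : Set ℝ) (hT : IsOpen T)
    (hsub : Set.Icc (0:ℝ) 1 ⊆ T)
    (hg : ∀ t ∈ T, HasDerivAt g (g1 t) t)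
    (hg1 : ∀ t ∈ T, HasDerivAt g1 (g2 t) t)
    (m : ℝ) (hm : ∀ t ∈ Set.Icc (0:ℝ) 1, m ≤ g2 t) :
    g 0 + g1 0 + m / 2 ≤ g 1 := by
  set ψ : ℝ → ℝ := fun t => g1 t - g1 0 - m * t with hψ
  have hψd : ∀ t ∈ T, HasDerivAt ψ (g2 t - m) t := by
    intro t ht
    have h1 : HasDerivAt (fun t : ℝ => m * t) m t := by
      simpa using (hasDerivAt_id t).const_mul m
    simpa using ((hg1 t ht).sub_const (g1 0)).fun_sub h1
  have hψmono : MonotoneOn ψ (Set.Icc 0 1) := by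
    apply monotoneOn_of_deriv_nonneg (convex_Icc 0 1)
    · intro t ht
      exact (hψd t (hsub ht)).continuousAt.continuousWithinAt
    · intro t ht
      rw [interior_Icc] at ht
      exact (hψd t (hsub (Set.Ioo_subset_Icc_self ht))).differentiableAt.differentiableWithinAt
    · intro t ht
      rw [interior_Icc] at ht
      rw [(hψd t (hsub (Set.Ioo_subset_Icc_self ht))).deriv]
      have := hm t (Set.Ioo_subset_Icc_self ht)
      linarith
  have hψ0 : ψ 0 = 0 := by simp [hψ]
  have hψnn : ∀ t ∈ Set.Icc (0:ℝ) 1, 0 ≤ ψ t := by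
    intro t ht
    have := hψmono (Set.left_mem_Icc.mpr zero_le_one) ht ht.1
    linarith [hψ0 ▸ this]
  set φ : ℝ → ℝ := fun t => g t - g 0 - g1 0 * t - m / 2 * t ^ 2 with hφ
  have hφd : ∀ t ∈ T, HasDerivAt φ (ψ t) t := by
    intro t ht
    have h1 : HasDerivAt (fun t : ℝ => g1 0 * t) (g1 0) t := by
      simpa using (hasDerivAt_id t).const_mul (g1 0)
    have h2 : HasDerivAt (fun t : ℝ => m / 2 * t ^ 2) (m * t) t := by
      have := (hasDerivAt_pow 2 t).const_mul (m / 2)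
      exact this.congr_deriv (by norm_num; ring)
    have := (((hg t ht).sub_const (g 0)).fun_sub h1).fun_sub h2
    convert this using 1
  have hφmono : MonotoneOn φ (Set.Icc 0 1) := by
    apply monotoneOn_of_deriv_nonneg (convex_Icc 0 1)
    · intro t ht
      exact (hφd t (hsub ht)).continuousAt.continuousWithinAt
    · intro t ht
      rw [interior_Icc] at ht
      exact (hφd t (hsub (Set.Ioo_subset_Icc_self ht))).differentiableAt.differentiableWithinAt
    · intro t ht
      rw [interior_Icc] at ht
      rw [(hφd t (hsub (Set.Ioo_subset_Icc_self ht))).deriv]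
      exact hψnn t (Set.Ioo_subset_Icc_self ht)
  have h01 := hφmono (Set.left_mem_Icc.mpr zero_le_one) (Set.right_mem_Icc.mpr zero_le_one) zero_le_one
  simp only [hφ] at h01
  nlinarith [h01]

theorem quadratic_bounds_local {n : ℕ} (f : (Fin n → ℝ) → ℝ)
    (xa xb : Fin n → ℝ) (U : Set (Fin n → ℝ))
    (hU : IsOpen U) (hsegU : segment ℝ xa xb ⊆ U)
    (hf : ContDiffOn ℝ 2 f U)
    (Ml Mu : Fin n → Fin n → ℝ)
    (hM : ∀ x ∈ segment ℝ xa xb, ∀ i j, Ml i j < pderiv2 f i j x ∧ pderiv2 f i j x < Mu i j) :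
    f xb - f xa ≥ (∑ i, pderiv1 f i xa * (xb i - xa i)) +
      (1 / 2) * (∑ i, ∑ j, min (Ml i j * ((xb i - xa i) * (xb j - xa j)))
        (Mu i j * ((xb i - xa i) * (xb j - xa j)))) ∧
    f xb - f xa ≤ (∑ i, pderiv1 f i xa * (xb i - xa i)) +
      (1 / 2) * (∑ i, ∑ j, max (Ml i j * ((xb i - xa i) * (xb j - xa j)))
        (Mu i j * ((xb i - xa i) * (xb j - xa j)))) := by
  classical
  set d : Fin n → ℝ := xb - xa with hd
  set c : ℝ → (Fin n → ℝ) := fun t => xa + t • d with hc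
  have hcont : Continuous c := by
    apply continuous_const.add
    exact continuous_id.smul continuous_const
  set T : Set ℝ := c ⁻¹' U with hT
  have hTopen : IsOpen T := hU.preimage hcont
  have hcseg : ∀ t ∈ Set.Icc (0:ℝ) 1, c t ∈ segment ℝ xa xb := by
    intro t ht
    rw [segment_eq_image']
    exact ⟨t, ht, rfl⟩
  have hsub : Set.Icc (0:ℝ) 1 ⊆ T := fun t ht => hsegU (hcseg t ht)
  have hcd : ∀ t : ℝ, HasDerivAt c d t := by
    intro t
    exact (((hasDerivAt_id t).smul_const d).const_add xa).congr_deriv (one_smul ℝ d)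
  -- differentiability facts
  have hfd : ∀ x ∈ U, DifferentiableAt ℝ f x := fun x hx =>
    (hf.contDiffAt (hU.mem_nhds hx)).differentiableAt (by norm_num)
  have hf'd : ∀ (i : Fin n), ∀ x ∈ U, DifferentiableAt ℝ (pderiv1 f i) x := by
    intro i x hx
    have h1 : ContDiffAt ℝ 1 (fderiv ℝ f) x :=
      (hf.contDiffAt (hU.mem_nhds hx)).fderiv_right (by norm_num)
    exact (h1.differentiableAt one_ne_zero).clm_apply (differentiableAt_const _)
  set g : ℝ → ℝ := fun t => f (c t) with hg
  set g1 : ℝ → ℝ := fun t => ∑ i, d i * pderiv1 f i (c t) with hg1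
  set g2 : ℝ → ℝ := fun t => ∑ i, ∑ j, pderiv2 f i j (c t) * (d i * d j) with hg2
  have hgd : ∀ t ∈ T, HasDerivAt g (g1 t) t := by
    intro t ht
    have h := ((hfd (c t) ht).hasFDerivAt).comp_hasDerivAt t (hcd t)
    simpa [hg, hg1, Function.comp_def, fderiv_apply_eq_sum f (c t) d] using h
  have hg1d : ∀ t ∈ T, HasDerivAt g1 (g2 t) t := by
    intro t ht
    have : HasDerivAt g1 (∑ i, d i * ∑ j, d j * pderiv2 f i j (c t)) t := by
      apply HasDerivAt.fun_sum
      intro i _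
      have h := ((hf'd i (c t) ht).hasFDerivAt).comp_hasDerivAt t (hcd t)
      have h2 : fderiv ℝ (pderiv1 f i) (c t) d = ∑ j, d j * pderiv2 f i j (c t) := by
        rw [fderiv_apply_eq_sum (pderiv1 f i) (c t) d]
        rfl
      have := h.const_mul (d i)
      rw [h2] at this
      simpa [Function.comp_def] using this
    convert this using 1
    simp only [hg2, Finset.mul_sum]
    apply Finset.sum_congr rfl
    intro i _
    apply Finset.sum_congr rfl
    intro j _
    ring
  have hg0 : g 0 = f xa := by simp [hg, hc]
  have hg01 : g 1 = f xb := by simp [hg, hc, hd]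
  have hg10 : g1 0 = ∑ i, pderiv1 f i xa * (xb i - xa i) := by
    simp only [hg1]
    have hc0 : c 0 = xa := by simp [hc]
    rw [hc0]
    apply Finset.sum_congr rfl
    intro i _
    simp [hd]
    ring
  -- bounds on g2
  set m : ℝ := ∑ i, ∑ j, min (Ml i j * ((xb i - xa i) * (xb j - xa j)))
      (Mu i j * ((xb i - xa i) * (xb j - xa j))) with hm
  set M : ℝ := ∑ i, ∑ j, max (Ml i j * ((xb i - xa i) * (xb j - xa j)))
      (Mu i j * ((xb i - xa i) * (xb j - xa j))) with hM'
  have hdi : ∀ i, d i = xb i - xa i := fun i => by simp [hd]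
  have hlow : ∀ t ∈ Set.Icc (0:ℝ) 1, m ≤ g2 t := by
    intro t ht
    apply Finset.sum_le_sum
    intro i _
    apply Finset.sum_le_sum
    intro j _
    obtain ⟨h1, h2⟩ := hM (c t) (hcseg t ht) i j
    rw [hdi i, hdi j]
    rcases le_total 0 ((xb i - xa i) * (xb j - xa j)) with h | h
    · exact le_trans (min_le_left _ _) (by nlinarith)
    · exact le_trans (min_le_right _ _) (by nlinarith)
  have hhigh : ∀ t ∈ Set.Icc (0:ℝ) 1, g2 t ≤ M := by
    intro t ht
    apply Finset.sum_le_sum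
    intro i _
    apply Finset.sum_le_sum
    intro j _
    obtain ⟨h1, h2⟩ := hM (c t) (hcseg t ht) i j
    rw [hdi i, hdi j]
    rcases le_total 0 ((xb i - xa i) * (xb j - xa j)) with h | h
    · exact le_trans (by nlinarith) (le_max_right _ _)
    · exact le_trans (by nlinarith) (le_max_left _ _)
  have hL := second_order_lower g g1 g2 T hTopen hsub hgd hg1d m hlow
  have hH := second_order_lower (fun t => -g t) (fun t => -g1 t) (fun t => -g2 t) T hTopen hsub
    (fun t ht => (hgd t ht).neg) (fun t ht => (hg1d t ht).neg) (-M)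
    (fun t ht => show -M ≤ -g2 t from by linarith [hhigh t ht])
  rw [hg0, hg01, hg10] at hL hH
  constructor
  · linarith
  · linarith
end
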